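/- arXiv:math-ph/0608052 — 3 statements merged into one kernel-verified Lean document; each statement's English description precedes it below -/
import Mathlib

section
/- The Gram matrix of Laguerre polynomials against exponentially weighted ₀F₁ functions is explicit: for a > 0 and integer i ≥ 1, the integral ((−1)^{i−1}(i−1)!/Γ(α+1)) ∫₀^∞ x^α e^{−x} L^α_{i−1}(x) ₀F₁(α+1; a x) dx equals a^{i−1} e^{a}. -/
open Finset in
/-- The confluent hypergeometric function `₀F₁(c; x)`. -/
noncomputable def hyp0F1 (c x : ℝ) : ℝ :=
  ∑' k : ℕ, x ^ k / ((∏ j ∈ range k, (c + j)) * (k.factorial))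

open Finset in
/-- The generalized Laguerre polynomial `L^α_n(x)`. -/
noncomputable def laguerreL (α : ℝ) (n : ℕ) (x : ℝ) : ℝ :=
  ∑ k ∈ range (n + 1),
    (-1) ^ k * (∏ j ∈ range (n - k), (α + k + 1 + j)) /
      ((n - k).factorial * k.factorial) * x ^ k

open Finset

private lemma gammaProd {x : ℝ} (hx : 0 < x) (k : ℕ) :
    Real.Gamma (x + k) = (∏ j ∈ range k, (x + j)) * Real.Gamma x := by
  induction k with
  | zero => simp
  | succ k ih =>
    have h1 : x + (k + 1 : ℕ) = (x + k) + 1 := by push_cast; ring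
    rw [h1, Real.Gamma_add_one (by positivity), ih, prod_range_succ]
    ring

private lemma altSum (n : ℕ) : ∀ (k : ℕ) (x : ℝ),
    ∑ m ∈ range (n + 1), (-1 : ℝ) ^ m * (n.choose m : ℝ) * ∏ j ∈ range k, (x + m + j)
      = (-1 : ℝ) ^ n * (k.descFactorial n : ℝ) * ∏ j ∈ range (k - n), (x + n + j) := by
  induction n with
  | zero => intro k x; simp
  | succ n ih =>
    intro k x
    have key : ∑ m ∈ range (n + 2), (-1 : ℝ) ^ m * ((n+1).choose m : ℝ) * ∏ j ∈ range k, (x + m + j)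
        = (∑ m ∈ range (n + 1), (-1 : ℝ) ^ m * (n.choose m : ℝ) * ∏ j ∈ range k, (x + m + j))
          - ∑ m ∈ range (n + 1), (-1 : ℝ) ^ m * (n.choose m : ℝ) * ∏ j ∈ range k, ((x+1) + m + j) := by
      rw [Finset.sum_range_succ'
        (fun m => (-1 : ℝ) ^ m * ((n+1).choose m : ℝ) * ∏ j ∈ range k, (x + m + j)) (n+1)]
      have split : ∀ m ∈ range (n+1),
          (-1 : ℝ) ^ (m+1) * ((n+1).choose (m+1) : ℝ) * ∏ j ∈ range k, (x + (m+1 : ℕ) + j)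
          = ((-1 : ℝ) ^ (m+1) * ((n.choose (m+1)) : ℝ) * ∏ j ∈ range k, (x + (m+1 : ℕ) + j))
            + (-((-1 : ℝ) ^ m * (n.choose m : ℝ) * ∏ j ∈ range k, ((x+1) + m + j))) := by
        intro m _
        rw [Nat.choose_succ_succ]
        push_cast
        rw [show (∏ j ∈ range k, (x + (↑m + 1) + ↑j)) = ∏ j ∈ range k, ((x+1) + ↑m + ↑j) from
          Finset.prod_congr rfl fun j _ => by ring]
        ring
      rw [Finset.sum_congr rfl split, Finset.sum_add_distrib]
      have hA : (∑ m ∈ range (n+1),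
            (-1 : ℝ) ^ (m+1) * ((n.choose (m+1)) : ℝ) * ∏ j ∈ range k, (x + (m+1 : ℕ) + j))
          + (-1 : ℝ) ^ (0:ℕ) * ((n.choose 0 : ℕ) : ℝ) * ∏ j ∈ range k, (x + ((0:ℕ):ℝ) + j)
          = ∑ m ∈ range (n + 1), (-1 : ℝ) ^ m * (n.choose m : ℝ) * ∏ j ∈ range k, (x + m + j) := by
        rw [← Finset.sum_range_succ'
          (fun m => (-1 : ℝ) ^ m * (n.choose m : ℝ) * ∏ j ∈ range k, (x + m + j)) (n+1)]
        rw [Finset.sum_range_succ, Nat.choose_succ_self]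
        simp
      have hB : (∑ m ∈ range (n+1),
            -((-1 : ℝ) ^ m * (n.choose m : ℝ) * ∏ j ∈ range k, ((x+1) + m + j)))
          = - ∑ m ∈ range (n+1), (-1 : ℝ) ^ m * (n.choose m : ℝ) * ∏ j ∈ range k, ((x+1) + m + j) := by
        rw [Finset.sum_neg_distrib]
      rw [hB]
      rw [show ((-1:ℝ)^(0:ℕ) * (((n+1).choose 0 : ℕ) : ℝ) * ∏ j ∈ range k, (x + ((0:ℕ):ℝ) + j))
          = (-1 : ℝ) ^ (0:ℕ) * ((n.choose 0 : ℕ) : ℝ) * ∏ j ∈ range k, (x + ((0:ℕ):ℝ) + j) by simp]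
      linarith [hA]
    rw [key, ih k x, ih k (x+1)]
    rcases Nat.lt_or_ge k (n+1) with hk | hk
    · have h1 : k - n = 0 := by omega
      have h2 : k - (n+1) = 0 := by omega
      have h3 : k.descFactorial (n+1) = 0 := Nat.descFactorial_eq_zero_iff_lt.mpr (by omega)
      rw [h1, h2, h3]
      simp
    · have hK : k - n = (k - (n+1)) + 1 := by omega
      set K := k - (n+1) with hKdef
      rw [hK]
      have p1 : ∏ j ∈ range (K+1), (x + n + j)
          = (∏ j ∈ range K, (x + (n+1 : ℕ) + j)) * (x + n) := by
        rw [Finset.prod_range_succ' (fun j => (x + n + j)) K]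
        push_cast
        ring_nf
      have p2 : ∏ j ∈ range (K+1), ((x+1) + n + j)
          = (∏ j ∈ range K, (x + (n+1 : ℕ) + j)) * (x + n + (K+1)) := by
        rw [Finset.prod_range_succ]
        push_cast
        ring_nf
      rw [p1, p2]
      have hD : (k.descFactorial (n+1) : ℝ) = (K+1) * (k.descFactorial n : ℝ) := by
        rw [Nat.descFactorial_succ]
        push_cast [show k - n = K + 1 from hK]
        ring
      rw [hD]
      ring

open MeasureTheory in
private lemma momentIntegrable {α : ℝ} (hα : -1 < α) (p : ℕ) :
    IntegrableOn (fun x : ℝ => x ^ α * Real.exp (-x) * x ^ p) (Set.Ioi 0) := by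
  have hs : (0:ℝ) < α + 1 + p := by linarith [Nat.cast_nonneg (α := ℝ) p]
  have := Real.GammaIntegral_convergent hs
  refine this.congr_fun ?_ measurableSet_Ioi
  intro x hx
  have hx' : (0:ℝ) < x := hx
  simp only
  rw [show α + 1 + (p:ℝ) - 1 = α + p by ring, Real.rpow_add hx', Real.rpow_natCast]
  ring

open MeasureTheory in
private lemma momentIntegral {α : ℝ} (hα : -1 < α) (p : ℕ) :
    ∫ x in Set.Ioi (0:ℝ), x ^ α * Real.exp (-x) * x ^ p = Real.Gamma (α + 1 + p) := by
  have hs : (0:ℝ) < α + 1 + p := by linarith [Nat.cast_nonneg (α := ℝ) p]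
  rw [Real.Gamma_eq_integral hs]
  refine setIntegral_congr_fun measurableSet_Ioi fun x hx => ?_
  have hx' : (0:ℝ) < x := hx
  rw [show α + 1 + (p:ℝ) - 1 = α + p by ring, Real.rpow_add hx', Real.rpow_natCast]
  ring

private lemma coeffSum {α : ℝ} (hα : -1 < α) (n k : ℕ) :
    ∑ m ∈ range (n + 1),
      (-1:ℝ) ^ m * (∏ j ∈ range (n - m), (α + m + 1 + j)) / ((n - m).factorial * m.factorial)
        * Real.Gamma (α + 1 + ((m + k : ℕ) : ℝ))
    = (-1:ℝ) ^ n * Real.Gamma (α + 1) * (k.descFactorial n : ℝ)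
        * (∏ j ∈ range k, (α + 1 + j)) / n.factorial := by
  have h1 : (0:ℝ) < α + 1 := by linarith
  have hPos : ∀ r : ℕ, (0:ℝ) < ∏ j ∈ range r, (α + 1 + j) := by
    intro r
    exact Finset.prod_pos fun j _ => by positivity
  have termEq : ∀ m ∈ range (n + 1),
      (-1:ℝ) ^ m * (∏ j ∈ range (n - m), (α + m + 1 + j)) / ((n - m).factorial * m.factorial)
        * Real.Gamma (α + 1 + ((m + k : ℕ) : ℝ))
      = (Real.Gamma (α + 1) * (∏ j ∈ range n, (α + 1 + j)) / n.factorial)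
        * ((-1:ℝ) ^ m * (n.choose m : ℝ) * ∏ j ∈ range k, ((α + 1) + m + j)) := by
    intro m hm
    have hmn : m ≤ n := by simpa using Nat.lt_succ_iff.mp (Finset.mem_range.mp hm)
    have hΓ : Real.Gamma (α + 1 + ((m + k : ℕ) : ℝ))
        = (∏ j ∈ range (m + k), (α + 1 + j)) * Real.Gamma (α + 1) := gammaProd h1 (m + k)
    have hsplit1 : ∏ j ∈ range (m + k), (α + 1 + (j:ℝ))
        = (∏ j ∈ range m, (α + 1 + (j:ℝ))) * ∏ j ∈ range k, ((α + 1) + m + j) := by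
      rw [Finset.prod_range_add]
      congr 1
      exact Finset.prod_congr rfl fun j _ => by push_cast; ring
    have hsplit2 : (∏ j ∈ range n, (α + 1 + (j:ℝ)))
        = (∏ j ∈ range m, (α + 1 + (j:ℝ))) * ∏ j ∈ range (n - m), (α + m + 1 + j) := by
      conv_lhs => rw [show n = m + (n - m) by omega]
      rw [Finset.prod_range_add]
      congr 1
      exact Finset.prod_congr rfl fun j _ => by push_cast; ring
    have hfact : ((n.choose m : ℝ)) * (m.factorial : ℝ) * ((n - m).factorial : ℝ)
        = (n.factorial : ℝ) := by
      exact_mod_cast congrArg (Nat.cast (R := ℝ)) (Nat.choose_mul_factorial_mul_factorial hmn)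
    rw [hΓ, hsplit1, hsplit2]
    have hne1 : ((n - m).factorial : ℝ) ≠ 0 := Nat.cast_ne_zero.mpr (Nat.factorial_ne_zero _)
    have hne2 : (m.factorial : ℝ) ≠ 0 := Nat.cast_ne_zero.mpr (Nat.factorial_ne_zero _)
    have hne3 : (n.factorial : ℝ) ≠ 0 := Nat.cast_ne_zero.mpr (Nat.factorial_ne_zero _)
    field_simp
    linear_combination (-(∏ j ∈ range (n - m), (α + m + 1 + j))) * hfact
  rw [Finset.sum_congr rfl termEq, ← Finset.mul_sum, altSum n k (α + 1)]
  have hD : (k.descFactorial n : ℝ) * ((∏ j ∈ range n, (α + 1 + j))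
      * ∏ j ∈ range (k - n), ((α + 1) + n + j))
      = (k.descFactorial n : ℝ) * ∏ j ∈ range k, (α + 1 + j) := by
    rcases Nat.lt_or_ge k n with hk | hk
    · rw [Nat.descFactorial_eq_zero_iff_lt.mpr hk]
      simp
    · congr 1
      conv_rhs => rw [show k = n + (k - n) by omega]
      rw [Finset.prod_range_add]
      congr 1
      exact Finset.prod_congr rfl fun j _ => by push_cast; ring
    
  field_simp
  linear_combination hD

private lemma expBound {a : ℝ} (ha : 0 < a) (k : ℕ) :
    a ^ k / k.factorial ≤ Real.exp (2*a) * (1/2) ^ k := by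
  have h1 : (2*a) ^ k / k.factorial ≤ Real.exp (2*a) := by
    have hs := NormedSpace.expSeries_div_hasSum_exp (2*a)
    rw [← Real.exp_eq_exp_ℝ] at hs
    exact le_hasSum hs k fun i _ => by positivity
  have h2 : a ^ k / k.factorial = ((2*a) ^ k / k.factorial) * (1/2 : ℝ) ^ k := by
    rw [mul_pow]
    have : (k.factorial : ℝ) ≠ 0 := Nat.cast_ne_zero.mpr (Nat.factorial_ne_zero _)
    field_simp
    rw [← mul_pow]; norm_num
  rw [h2]
  exact mul_le_mul_of_nonneg_right h1 (by positivity)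

set_option maxHeartbeats 1000000 in
private lemma sumAux {α : ℝ} (hα : -1 < α) {a : ℝ} (ha : 0 < a) (m : ℕ) :
    Summable (fun k : ℕ => (∏ j ∈ range m, (α + 1 + ((k:ℝ) + j))) * a ^ k / k.factorial) := by
  have hmaj : Summable (fun k : ℕ => ((α+2+m)^m * Real.exp (2*a)) * (((k:ℝ)+1)^m * (1/2:ℝ)^k)) := by
    have b1 : Summable (fun k : ℕ => ((k:ℝ))^m * (1/2:ℝ)^k) :=
      summable_pow_mul_geometric_of_norm_lt_one m
        (by rw [Real.norm_eq_abs, abs_of_nonneg] <;> norm_num)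
    have b2 : Summable (fun k : ℕ => (((k+1:ℕ):ℝ))^m * (1/2:ℝ)^(k+1)) :=
      (summable_nat_add_iff 1).mpr b1
    have b4 : Summable (fun k : ℕ => ((k:ℝ)+1)^m * (1/2:ℝ)^k) := by
      refine (b2.mul_left 2).congr fun k => ?_
      push_cast
      ring
    exact b4.mul_left _
  have hfacpos : ∀ (k j : ℕ), (0:ℝ) < α + 1 + ((k:ℝ) + j) := by
    intro k j
    have h1 : (0:ℝ) ≤ k := Nat.cast_nonneg k
    have h2 : (0:ℝ) ≤ j := Nat.cast_nonneg j
    linarith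
  refine Summable.of_nonneg_of_le (fun k => ?_) (fun k => ?_) hmaj
  · have hp : (0:ℝ) ≤ ∏ j ∈ range m, (α + 1 + ((k:ℝ) + j)) :=
      (Finset.prod_pos fun j _ => hfacpos k j).le
    have hq : (0:ℝ) ≤ a ^ k := by positivity
    exact div_nonneg (mul_nonneg hp hq) (Nat.cast_nonneg _)
  · have hk0 : (0:ℝ) ≤ k := Nat.cast_nonneg k
    have hprod : ∏ j ∈ range m, (α + 1 + ((k:ℝ) + j))
        ≤ ∏ _j ∈ range m, ((α+2+(m:ℝ)) * ((k:ℝ)+1)) := by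
      refine Finset.prod_le_prod (fun j _ => (hfacpos k j).le) fun j hj => ?_
      have hj' : (j:ℝ) + 1 ≤ m := by
        exact_mod_cast Nat.succ_le_of_lt (Finset.mem_range.mp hj)
      have hm0 : (0:ℝ) < α + 1 + m := by
        have : (0:ℝ) ≤ m := Nat.cast_nonneg m
        linarith
      nlinarith [mul_nonneg hm0.le hk0]
    rw [Finset.prod_const, Finset.card_range] at hprod
    have hterm : (∏ j ∈ range m, (α + 1 + ((k:ℝ) + j))) * a ^ k / k.factorial
        = (∏ j ∈ range m, (α + 1 + ((k:ℝ) + j))) * (a ^ k / k.factorial) := by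
      ring
    rw [hterm]
    calc (∏ j ∈ range m, (α + 1 + ((k:ℝ) + j))) * (a ^ k / k.factorial)
        ≤ ((α+2+m) * ((k:ℝ)+1))^m * (Real.exp (2*a) * (1/2:ℝ)^k) := by
          refine mul_le_mul hprod (expBound ha k) (by positivity)
            (pow_nonneg ?_ m)
          have : (0:ℝ) < α + 1 + m := by
            have : (0:ℝ) ≤ m := Nat.cast_nonneg m
            linarith
          nlinarith
      _ = ((α+2+m)^m * Real.exp (2*a)) * (((k:ℝ)+1)^m * (1/2:ℝ)^k) := by
          rw [mul_pow]; ring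

private lemma lagFunEq (α : ℝ) (n k : ℕ) :
    (fun x : ℝ => x ^ α * Real.exp (-x) * laguerreL α n x * x ^ k)
      = fun x => ∑ m ∈ range (n + 1),
          ((-1:ℝ) ^ m * (∏ j ∈ range (n - m), (α + m + 1 + j)) / ((n - m).factorial * m.factorial))
            * (x ^ α * Real.exp (-x) * x ^ (m + k)) := by
  funext x
  rw [laguerreL, Finset.mul_sum, Finset.sum_mul]
  refine Finset.sum_congr rfl fun m _ => ?_
  rw [pow_add]
  ring

open MeasureTheory in
private lemma lagIntegrable {α : ℝ} (hα : -1 < α) (n k : ℕ) :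
    IntegrableOn (fun x : ℝ => x ^ α * Real.exp (-x) * laguerreL α n x * x ^ k) (Set.Ioi 0) := by
  rw [lagFunEq]
  exact integrable_finset_sum _ fun m _ => (momentIntegrable hα (m + k)).const_mul _

open MeasureTheory in
private lemma lagIntegral {α : ℝ} (hα : -1 < α) (n k : ℕ) :
    ∫ x in Set.Ioi (0:ℝ), x ^ α * Real.exp (-x) * laguerreL α n x * x ^ k
      = (-1:ℝ) ^ n * Real.Gamma (α + 1) * (k.descFactorial n : ℝ)
          * (∏ j ∈ range k, (α + 1 + j)) / n.factorial := by
  rw [lagFunEq]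
  rw [integral_finset_sum _ fun m _ => (momentIntegrable hα (m + k)).const_mul _]
  rw [← coeffSum hα n k]
  refine Finset.sum_congr rfl fun m _ => ?_
  rw [MeasureTheory.integral_const_mul, momentIntegral hα (m + k)]

open MeasureTheory in
set_option maxHeartbeats 1000000 in
theorem gram_laguerre_hyp0F1 (α : ℝ) (hα : -1 < α) (a : ℝ) (ha : 0 < a)
    (i : ℕ) (hi : 1 ≤ i) :
    (-1) ^ (i - 1) * ((i - 1).factorial : ℝ) *
        ∫ x in Set.Ioi (0 : ℝ),
          x ^ α * Real.exp (-x) * laguerreL α (i - 1) x * hyp0F1 (α + 1) (a * x) =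
      Real.Gamma (α + 1) * a ^ (i - 1) * Real.exp a := by
  set n := i - 1 with hn
  have h1 : (0:ℝ) < α + 1 := by linarith
  have hPpos : ∀ r : ℕ, (0:ℝ) < ∏ j ∈ range r, (α + 1 + (j:ℝ)) :=
    fun r => Finset.prod_pos fun j _ => by positivity
  set F : ℕ → ℝ → ℝ := fun k x => x ^ α * Real.exp (-x) * laguerreL α n x *
      ((a*x) ^ k / ((∏ j ∈ range k, (α + 1 + (j:ℝ))) * k.factorial)) with hF
  have hInt : ∀ x : ℝ, x ^ α * Real.exp (-x) * laguerreL α n x * hyp0F1 (α+1) (a*x)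
      = ∑' k, F k x := by
    intro x
    rw [hyp0F1, ← tsum_mul_left]
  have hFeq : ∀ k, F k = fun x =>
      (a^k / ((∏ j ∈ range k, (α + 1 + (j:ℝ))) * k.factorial)) *
        (x ^ α * Real.exp (-x) * laguerreL α n x * x ^ k) := by
    intro k
    funext x
    simp only [hF, mul_pow]
    ring
  have hFint : ∀ k, Integrable (F k) (volume.restrict (Set.Ioi 0)) := by
    intro k
    rw [hFeq k]
    exact ((lagIntegrable hα n k).const_mul _)
  have hne : ∀ k : ℕ, ((k.factorial : ℝ)) ≠ 0 :=
    fun k => Nat.cast_ne_zero.mpr (Nat.factorial_ne_zero _)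
  have hIK : ∀ k, ∫ x in Set.Ioi (0:ℝ), F k x
      = ((-1:ℝ)^n * Real.Gamma (α+1) / n.factorial) *
          ((k.descFactorial n : ℝ) * a^k / k.factorial) := by
    intro k
    rw [hFeq k, MeasureTheory.integral_const_mul, lagIntegral hα n k]
    have hPk := (hPpos k).ne'
    field_simp
  -- the coefficients of the Laguerre polynomial, in absolute value
  set c : ℕ → ℝ := fun m => (-1:ℝ) ^ m * (∏ j ∈ range (n - m), (α + m + 1 + j)) /
      ((n - m).factorial * m.factorial) with hc
  set B : ℕ → ℝ := fun k => ∑ m ∈ range (n+1),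
      (|c m| * Real.Gamma (α+1)) * ((∏ j ∈ range m, (α + 1 + ((k:ℝ) + j))) * a^k / k.factorial)
    with hB
  have hBsummable : Summable B := by
    refine summable_sum fun m _ => ?_
    exact (sumAux hα ha m).mul_left _
  have hGmajInt : ∀ k : ℕ, Integrable (fun x : ℝ => ∑ m ∈ range (n+1),
      (|c m| * (a^k / ((∏ j ∈ range k, (α + 1 + (j:ℝ))) * k.factorial))) *
        (x ^ α * Real.exp (-x) * x ^ (m+k))) (volume.restrict (Set.Ioi 0)) := by
    intro k
    exact integrable_finset_sum _ fun m _ => (momentIntegrable hα (m + k)).const_mul _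
  have hnormle : ∀ k, (∫ x in Set.Ioi (0:ℝ), ‖F k x‖) ≤ B k := by
    intro k
    have step1 : (∫ x in Set.Ioi (0:ℝ), ‖F k x‖)
        ≤ ∫ x in Set.Ioi (0:ℝ), ∑ m ∈ range (n+1),
            (|c m| * (a^k / ((∏ j ∈ range k, (α + 1 + (j:ℝ))) * k.factorial))) *
              (x ^ α * Real.exp (-x) * x ^ (m+k)) := by
      refine integral_mono_of_nonneg (ae_of_all _ fun x => norm_nonneg _) (hGmajInt k) ?_
      refine (ae_restrict_iff' measurableSet_Ioi).mpr (ae_of_all _ fun x hx => ?_)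
      have hx' : (0:ℝ) < x := hx
      have hxa : (0:ℝ) < x ^ α := Real.rpow_pos_of_pos hx' α
      have hLbound : |laguerreL α n x| ≤ ∑ m ∈ range (n+1), |c m| * x ^ m := by
        rw [laguerreL]
        refine (Finset.abs_sum_le_sum_abs _ _).trans ?_
        refine Finset.sum_le_sum fun m _ => ?_
        rw [abs_mul, abs_pow, abs_of_pos hx']
      have hD : (0:ℝ) < (∏ j ∈ range k, (α + 1 + (j:ℝ))) * k.factorial := by
        have := hPpos k
        have h2 : (0:ℝ) < k.factorial := by
          exact_mod_cast Nat.factorial_pos k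
        positivity
      have hnorm : ‖F k x‖ = (x ^ α * Real.exp (-x) * ((a*x) ^ k /
          ((∏ j ∈ range k, (α + 1 + (j:ℝ))) * k.factorial))) * |laguerreL α n x| := by
        simp only [hF]
        rw [Real.norm_eq_abs, abs_mul, abs_mul, abs_mul]
        rw [abs_of_pos hxa, abs_of_pos (Real.exp_pos _),
          abs_of_pos (div_pos (pow_pos (mul_pos ha hx') k) hD)]
        ring
      refine le_trans (le_of_eq hnorm) ?_
      calc (x ^ α * Real.exp (-x) * ((a*x) ^ k /
              ((∏ j ∈ range k, (α + 1 + (j:ℝ))) * k.factorial))) * |laguerreL α n x|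
          ≤ (x ^ α * Real.exp (-x) * ((a*x) ^ k /
              ((∏ j ∈ range k, (α + 1 + (j:ℝ))) * k.factorial))) *
              (∑ m ∈ range (n+1), |c m| * x ^ m) := by
            refine mul_le_mul_of_nonneg_left hLbound ?_
            have h3 : (0:ℝ) ≤ (a*x)^k / ((∏ j ∈ range k, (α + 1 + (j:ℝ))) * k.factorial) :=
              le_of_lt (div_pos (pow_pos (mul_pos ha hx') k) hD)
            positivity
        _ = ∑ m ∈ range (n+1),
            (|c m| * (a^k / ((∏ j ∈ range k, (α + 1 + (j:ℝ))) * k.factorial))) *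
              (x ^ α * Real.exp (-x) * x ^ (m+k)) := by
            rw [Finset.mul_sum]
            refine Finset.sum_congr rfl fun m _ => ?_
            rw [pow_add, mul_pow]
            ring
    refine step1.trans_eq ?_
    rw [integral_finset_sum _ fun m _ => (momentIntegrable hα (m + k)).const_mul _]
    refine Finset.sum_congr rfl fun m _ => ?_
    rw [MeasureTheory.integral_const_mul, momentIntegral hα (m + k)]
    have hΓ : Real.Gamma (α + 1 + ((m + k : ℕ) : ℝ))
        = (∏ j ∈ range (m + k), (α + 1 + (j:ℝ))) * Real.Gamma (α + 1) := gammaProd h1 (m + k)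
    have hsplit : ∏ j ∈ range (m + k), (α + 1 + (j:ℝ))
        = (∏ j ∈ range k, (α + 1 + (j:ℝ))) * ∏ j ∈ range m, (α + 1 + ((k:ℝ) + j)) := by
      rw [show m + k = k + m by omega, Finset.prod_range_add]
      congr 1
      exact Finset.prod_congr rfl fun j _ => by push_cast; ring
    rw [hΓ, hsplit]
    have hPk := (hPpos k).ne'
    field_simp
  have hFnormSummable : Summable fun k => ∫ x in Set.Ioi (0:ℝ), ‖F k x‖ := by
    refine Summable.of_nonneg_of_le (fun k => ?_) hnormle hBsummable
    exact integral_nonneg fun x => norm_nonneg _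
  have hswap : ∑' k, (∫ x in Set.Ioi (0:ℝ), F k x)
      = ∫ x in Set.Ioi (0:ℝ), ∑' k, F k x :=
    MeasureTheory.integral_tsum_of_summable_integral_norm hFint hFnormSummable
  have hgsum : HasSum (fun k : ℕ => (k.descFactorial n : ℝ) * a^k / k.factorial)
      (a^n * Real.exp a) := by
    have he := NormedSpace.expSeries_div_hasSum_exp a
    rw [← Real.exp_eq_exp_ℝ] at he
    have hfun : (fun j : ℕ => ((j+n).descFactorial n : ℝ) * a^(j+n) / (j+n).factorial)
        = fun j : ℕ => a^n * (a^j / j.factorial) := by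
      funext j
      have hq : (j.factorial : ℝ) * ((j+n).descFactorial n : ℝ) = ((j+n).factorial : ℝ) := by
        have h := Nat.factorial_mul_descFactorial (Nat.le_add_left n j)
        rw [Nat.add_sub_cancel] at h
        exact_mod_cast congrArg (Nat.cast (R := ℝ)) h
      have hne1 : ((j+n).factorial : ℝ) ≠ 0 := Nat.cast_ne_zero.mpr (Nat.factorial_ne_zero _)
      have hne2 : (j.factorial : ℝ) ≠ 0 := Nat.cast_ne_zero.mpr (Nat.factorial_ne_zero _)
      rw [pow_add]
      field_simp
      linear_combination hq
    have he2 : HasSum (fun j : ℕ => ((j+n).descFactorial n : ℝ) * a^(j+n) / (j+n).factorial)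
        (a^n * Real.exp a) := by
      rw [hfun]
      exact he.mul_left _
    have he3 := (hasSum_nat_add_iff (f := fun k : ℕ => (k.descFactorial n : ℝ) * a^k / k.factorial) n).mp he2
    have hzero : ∑ j ∈ range n, ((j.descFactorial n : ℝ) * a^j / j.factorial) = 0 := by
      refine Finset.sum_eq_zero fun j hj => ?_
      rw [Nat.descFactorial_eq_zero_iff_lt.mpr (Finset.mem_range.mp hj)]
      simp
    rw [hzero, add_zero] at he3
    exact he3
  have hint2 : (∫ x in Set.Ioi (0:ℝ),
      x ^ α * Real.exp (-x) * laguerreL α n x * hyp0F1 (α + 1) (a * x))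
      = ((-1:ℝ)^n * Real.Gamma (α+1) / n.factorial) * (a^n * Real.exp a) := by
    calc (∫ x in Set.Ioi (0:ℝ),
        x ^ α * Real.exp (-x) * laguerreL α n x * hyp0F1 (α + 1) (a * x))
        = ∫ x in Set.Ioi (0:ℝ), ∑' k, F k x := by simp only [hInt]
      _ = ∑' k, ∫ x in Set.Ioi (0:ℝ), F k x := hswap.symm
      _ = ∑' k, ((-1:ℝ)^n * Real.Gamma (α+1) / n.factorial) *
            ((k.descFactorial n : ℝ) * a^k / k.factorial) := tsum_congr hIK
      _ = ((-1:ℝ)^n * Real.Gamma (α+1) / n.factorial) * (a^n * Real.exp a) := by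
            rw [tsum_mul_left, hgsum.tsum_eq]
  rw [hint2]
  have hsq : ((-1:ℝ))^n * (-1)^n = 1 := by
    rw [← pow_add, ← two_mul, pow_mul]
    norm_num
  have hne3 : ((n.factorial : ℝ)) ≠ 0 := Nat.cast_ne_zero.mpr (Nat.factorial_ne_zero _)
  field_simp
  linear_combination hsq
end

section
/- The limit relation between ₀F₁-weights under shifts: w_α(x, a_j) = ∑_{ℓ≥0} ((a_j − a_i)^ℓ / ℓ!) w_{α+ℓ}(x, a_i), with the series converging absolutely for all finite a_i, a_j. -/
/-- The weight `w_α(x, a) = x^α e^{-x} ₀F₁(α+1; ax) / Γ(α+1)`. -/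
noncomputable def wAlpha (α x a : ℝ) : ℝ :=
  x ^ α * Real.exp (-x) * hyp0F1 (α + 1) (a * x) / Real.Gamma (α + 1)


open Finset Real

noncomputable def Fw (c z : ℝ) : ℝ := ∑' k : ℕ, z ^ k / (Real.Gamma (c + k) * k.factorial)

lemma Gamma_prod {c : ℝ} (hc : 0 < c) (k : ℕ) :
    Real.Gamma c * ∏ j ∈ range k, (c + j) = Real.Gamma (c + k) := by
  induction k with
  | zero => simp
  | succ n ih =>
    rw [Finset.prod_range_succ, ← mul_assoc, ih, Nat.cast_succ, ← add_assoc,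
      Real.Gamma_add_one (by positivity)]
    ring

lemma hyp_div {c : ℝ} (hc : 0 < c) (z : ℝ) :
    hyp0F1 c z / Real.Gamma c = Fw c z := by
  rw [hyp0F1, ← tsum_div_const]
  refine tsum_congr fun k => ?_
  rw [div_div, ← Gamma_prod hc k]
  ring

lemma Gamma_lower {c : ℝ} (hc : 0 < c) (n : ℕ) :
    Real.Gamma c * min c 1 ^ n ≤ Real.Gamma (c + n) := by
  rw [← Gamma_prod hc n]
  have h1 : (0:ℝ) < min c 1 := by positivity
  have hg := (Real.Gamma_pos_of_pos hc).le
  gcongr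
  calc min c 1 ^ n = ∏ j ∈ range n, min c 1 := by rw [Finset.prod_const, Finset.card_range]
    _ ≤ ∏ j ∈ range n, (c + j) := by
          refine Finset.prod_le_prod (fun j _ => h1.le) fun j _ => ?_
          have : min c 1 ≤ c := min_le_left _ _
          have : (0:ℝ) ≤ j := Nat.cast_nonneg j
          linarith

lemma anti_sum {c : ℝ} (hc : 0 < c) (z w : ℝ) (n : ℕ) :
    ∑ p ∈ antidiagonal n, z ^ p.1 / p.1.factorial *
        (w ^ p.2 / (Real.Gamma (c + p.1 + p.2) * p.2.factorial)) =
      (z + w) ^ n / (Real.Gamma (c + n) * n.factorial) := by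
  have h1 : ∀ p ∈ antidiagonal n, z ^ p.1 / p.1.factorial *
      (w ^ p.2 / (Real.Gamma (c + p.1 + p.2) * p.2.factorial)) =
      z ^ p.1 * w ^ p.2 * (n.choose p.1) / (Real.Gamma (c + n) * n.factorial) := by
    rintro ⟨a, b⟩ hab
    rw [Finset.HasAntidiagonal.mem_antidiagonal] at hab
    have hle : a ≤ n := by omega
    have hb : b = n - a := by omega
    have hΓ : Real.Gamma (c + a + b) = Real.Gamma (c + n) := by
      rw [add_assoc, ← Nat.cast_add, hab]
    rw [hΓ, Nat.cast_choose ℝ hle, ← hb]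
    have f1 : (a.factorial : ℝ) ≠ 0 := Nat.cast_ne_zero.mpr a.factorial_ne_zero
    have f2 : (b.factorial : ℝ) ≠ 0 := Nat.cast_ne_zero.mpr b.factorial_ne_zero
    have f3 : (n.factorial : ℝ) ≠ 0 := Nat.cast_ne_zero.mpr n.factorial_ne_zero
    have f4 : Real.Gamma (c + n) ≠ 0 := (Real.Gamma_pos_of_pos (by positivity)).ne'
    field_simp
  rw [Finset.sum_congr rfl h1, ← Finset.sum_div, Nat.sum_antidiagonal_eq_sum_range_succ_mk,
    add_pow]

set_option maxHeartbeats 1000000 in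
lemma key (c : ℝ) (hc : 0 < c) (z w : ℝ) :
    Summable (fun ℓ : ℕ => |z ^ ℓ / ℓ.factorial * Fw (c + ℓ) w|) ∧
      ∑' ℓ : ℕ, z ^ ℓ / ℓ.factorial * Fw (c + ℓ) w = Fw c (z + w) := by
  set m : ℝ := min c 1 with hm
  have hm0 : 0 < m := by positivity
  set M : ℝ := m⁻¹ with hM
  have hM0 : 0 ≤ M := by positivity
  set G : ℕ × ℕ → ℝ := fun p =>
    z ^ p.1 / p.1.factorial * (w ^ p.2 / (Real.Gamma (c + p.1 + p.2) * p.2.factorial)) with hG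
  have hΓpos : ∀ ℓ k : ℕ, 0 < Real.Gamma (c + ℓ + k) := fun ℓ k => by
    apply Real.Gamma_pos_of_pos; positivity
  -- bound
  have hbound : ∀ p : ℕ × ℕ, |G p| ≤
      (Real.Gamma c)⁻¹ * ((M * |z|) ^ p.1 / p.1.factorial * ((M * |w|) ^ p.2 / p.2.factorial)) := by
    rintro ⟨ℓ, k⟩
    have hΓ := hΓpos ℓ k
    have hΓc := Real.Gamma_pos_of_pos hc
    have hlow : Real.Gamma c * m ^ (ℓ + k) ≤ Real.Gamma (c + ℓ + k) := by
      have := Gamma_lower hc (ℓ + k)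
      rwa [Nat.cast_add, ← add_assoc] at this
    have hinv : (Real.Gamma (c + ℓ + k))⁻¹ ≤ (Real.Gamma c)⁻¹ * M ^ (ℓ + k) := by
      rw [hM, inv_pow, ← mul_inv]
      exact inv_anti₀ (by positivity) hlow
    have habs : |G (ℓ, k)| =
        |z| ^ ℓ * |w| ^ k / (ℓ.factorial * k.factorial) * (Real.Gamma (c + ℓ + k))⁻¹ := by
      rw [hG]
      rw [abs_mul, abs_div, abs_div, abs_pow, abs_pow, abs_mul,
        Nat.abs_cast, Nat.abs_cast, abs_of_pos hΓ]
      simp only [div_eq_mul_inv, mul_inv]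
      ring
    rw [habs]
    calc |z| ^ ℓ * |w| ^ k / (ℓ.factorial * k.factorial) * (Real.Gamma (c + ℓ + k))⁻¹
        ≤ |z| ^ ℓ * |w| ^ k / (ℓ.factorial * k.factorial) * ((Real.Gamma c)⁻¹ * M ^ (ℓ + k)) := by
          exact mul_le_mul_of_nonneg_left hinv (by positivity)
      _ = (Real.Gamma c)⁻¹ * ((M * |z|) ^ ℓ / ℓ.factorial * ((M * |w|) ^ k / k.factorial)) := by
          rw [pow_add, mul_pow, mul_pow]
          simp only [div_eq_mul_inv, mul_inv]
          ring
  have hB : Summable fun p : ℕ × ℕ =>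
      (Real.Gamma c)⁻¹ * ((M * |z|) ^ p.1 / p.1.factorial * ((M * |w|) ^ p.2 / p.2.factorial)) :=
    (((Real.summable_pow_div_factorial (M * |z|)).mul_of_nonneg
      (Real.summable_pow_div_factorial (M * |w|)) (fun ℓ => by positivity)
      (fun k => by positivity))).mul_left _
  have habsG : Summable fun p : ℕ × ℕ => |G p| :=
    Summable.of_nonneg_of_le (fun p => abs_nonneg _) hbound hB
  have hGsum : Summable G := habsG.of_abs
  -- fiberwise
  have hfiber : ∀ ℓ : ℕ, Summable fun k => |G (ℓ, k)| := fun ℓ => habsG.prod_factor ℓ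
  have houter : Summable fun ℓ : ℕ => ∑' k : ℕ, |G (ℓ, k)| :=
    (habsG.hasSum.prod_fiberwise fun ℓ => (hfiber ℓ).hasSum).summable
  have hinnertsum : ∀ ℓ : ℕ, ∑' k : ℕ, G (ℓ, k) = z ^ ℓ / ℓ.factorial * Fw (c + ℓ) w := by
    intro ℓ
    simp only [hG]
    rw [Fw]
    exact tsum_mul_left
  constructor
  · refine Summable.of_nonneg_of_le (fun ℓ => abs_nonneg _) (fun ℓ => ?_) houter
    rw [← hinnertsum ℓ]
    calc |∑' k : ℕ, G (ℓ, k)| = ‖∑' k : ℕ, G (ℓ, k)‖ := (Real.norm_eq_abs _).symm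
      _ ≤ ∑' k : ℕ, ‖G (ℓ, k)‖ :=
          norm_tsum_le_tsum_norm (by simpa only [Real.norm_eq_abs] using hfiber ℓ)
      _ = ∑' k : ℕ, |G (ℓ, k)| := by simp only [Real.norm_eq_abs]
  · have h1 : ∑' ℓ : ℕ, z ^ ℓ / ℓ.factorial * Fw (c + ℓ) w = ∑' p : ℕ × ℕ, G p := by
      rw [Summable.tsum_prod' hGsum fun ℓ => hGsum.prod_factor ℓ]
      exact (tsum_congr hinnertsum).symm
    have hσ : Summable fun σ : Σ n : ℕ, antidiagonal n => G (σ.2 : ℕ × ℕ) :=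
      Finset.HasAntidiagonal.sigmaAntidiagonalEquivProd.summable_iff.mpr hGsum
    have h2 : ∑' p : ℕ × ℕ, G p = ∑' n : ℕ, ∑ p ∈ antidiagonal n, G p := by
      rw [← Finset.HasAntidiagonal.sigmaAntidiagonalEquivProd.tsum_eq (G : ℕ × ℕ → ℝ)]
      simp only [Finset.HasAntidiagonal.sigmaAntidiagonalEquivProd_apply]
      rw [Summable.tsum_sigma' (fun n => (hasSum_fintype _).summable) hσ]
      refine tsum_congr fun n => ?_
      rw [tsum_fintype]
      exact Finset.sum_coe_sort (antidiagonal n) G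
    rw [h1, h2, Fw]
    exact tsum_congr fun n => anti_sum hc z w n


lemma Fw_summable_abs (c : ℝ) (hc : 0 < c) (z w : ℝ) :
    Summable (fun ℓ : ℕ => |z ^ ℓ / ℓ.factorial * Fw (c + ℓ) w|) := (key c hc z w).1

theorem wAlpha_shift_series (α : ℝ) (hα : -1 < α) (x : ℝ) (hx : 0 ≤ x)
    (ai aj : ℝ) (hai : 0 ≤ ai) (haj : 0 ≤ aj) :
    wAlpha α x aj =
        ∑' ℓ : ℕ, (aj - ai) ^ ℓ / (ℓ.factorial : ℝ) * wAlpha (α + ℓ) x ai ∧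
      Summable (fun ℓ : ℕ =>
        |(aj - ai) ^ ℓ / (ℓ.factorial : ℝ) * wAlpha (α + ℓ) x ai|) := by
  rcases hx.eq_or_lt with hx0 | hx0
  · -- x = 0
    subst hx0
    have hyp0 : ∀ c : ℝ, hyp0F1 c 0 = 1 := by
      intro c
      rw [hyp0F1, tsum_eq_single 0 (fun k hk => by simp [zero_pow hk])]
      simp
    have hW : ∀ β a : ℝ, wAlpha β 0 a = (0 : ℝ) ^ β / Real.Gamma (β + 1) := by
      intro β a
      rw [wAlpha, mul_zero, hyp0 (β + 1), neg_zero, Real.exp_zero, mul_one, mul_one]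
    by_cases hα0 : α = 0
    · subst hα0
      refine ⟨?_, ?_⟩
      · rw [hW 0 aj, tsum_eq_single 0 ?_]
        · rw [hW _ ai]
          norm_num [Real.rpow_natCast]
        · intro ℓ hℓ
          rw [hW _ ai]
          rw [Real.zero_rpow (by simpa using hℓ), zero_div, mul_zero]
      · apply summable_of_ne_finset_zero (s := ({0} : Finset ℕ))
        intro ℓ hℓ
        simp only [Finset.mem_singleton] at hℓ
        rw [hW _ ai, Real.zero_rpow (by simpa using hℓ), zero_div,
          mul_zero, abs_zero]
    · have hterm : ∀ ℓ : ℕ, wAlpha (α + ℓ) 0 ai = 0 := by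
        intro ℓ
        rw [hW _ ai, Real.zero_rpow ?_, zero_div]
        intro h
        rcases Nat.eq_zero_or_pos ℓ with h0 | h0
        · subst h0; simp at h; exact hα0 h
        · have h1 : (1 : ℝ) ≤ (ℓ : ℝ) := by exact_mod_cast h0
          linarith
      refine ⟨?_, ?_⟩
      · rw [hW _ aj, Real.zero_rpow hα0, zero_div]
        symm
        calc ∑' ℓ : ℕ, (aj - ai) ^ ℓ / (ℓ.factorial : ℝ) * wAlpha (α + ℓ) 0 ai
            = ∑' _ : ℕ, (0 : ℝ) := tsum_congr fun ℓ => by rw [hterm ℓ, mul_zero]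
          _ = 0 := tsum_zero
      · simp only [hterm, mul_zero, abs_zero]
        exact summable_zero
  · -- x > 0
    have hc : 0 < α + 1 := by linarith
    obtain ⟨hsum, heq⟩ := key (α + 1) hc ((aj - ai) * x) (ai * x)
    have hA : 0 < x ^ α * Real.exp (-x) := by positivity
    have hterm : ∀ ℓ : ℕ, (aj - ai) ^ ℓ / (ℓ.factorial : ℝ) * wAlpha (α + ℓ) x ai =
        x ^ α * Real.exp (-x) *
          (((aj - ai) * x) ^ ℓ / (ℓ.factorial : ℝ) * Fw (α + 1 + ℓ) (ai * x)) := by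
      intro ℓ
      rw [wAlpha]
      have h1 : α + (ℓ : ℝ) + 1 = α + 1 + (ℓ : ℝ) := by ring
      rw [h1, mul_div_assoc, hyp_div (by positivity) (ai * x),
        Real.rpow_add hx0, Real.rpow_natCast, mul_pow]
      ring
    refine ⟨?_, ?_⟩
    · rw [wAlpha, mul_div_assoc, hyp_div hc (aj * x)]
      have h2 : aj * x = (aj - ai) * x + ai * x := by ring
      rw [h2, ← heq, ← tsum_mul_left]
      exact tsum_congr fun ℓ => (hterm ℓ).symm
    · refine (summable_congr fun ℓ => ?_).mpr (hsum.mul_left (x ^ α * Real.exp (-x)))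
      rw [hterm ℓ, abs_mul, abs_of_pos hA]
end

section
/- If eigenvalues (x_1,...,x_N) have joint density proportional to det[η_i(x_j)]det[ξ_i(x_j)] with invertible Gram matrix g, the 1-point function satisfies ρ_{1,N}(x) = K_N(x,x), where K_N(x,y) = ∑_{i,j} η_i(x) c_{ij} ξ_j(y) with c = (g^t)^{−1}. -/
open MeasureTheory Finset

lemma restrict_pi_eq_pi_restrict {n : ℕ} {I : Set ℝ} (hI : MeasurableSet I) :
    (volume : Measure (Fin n → ℝ)).restrict (Set.univ.pi fun _ => I)
      = Measure.pi (fun _ : Fin n => volume.restrict I) := by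
  refine (Measure.pi_eq fun s hs => ?_).symm
  rw [Measure.restrict_apply (MeasurableSet.univ_pi hs), ← Set.pi_inter_distrib,
    volume_pi_pi]
  simp_rw [Measure.restrict_apply (hs _)]

lemma integrable_pi_prod {n : ℕ} (μ : Measure ℝ) [SigmaFinite μ]
    {f : Fin n → ℝ → ℝ} (hf : ∀ i, Integrable (f i) μ) :
    Integrable (fun y : Fin n → ℝ => ∏ i, f i (y i)) (Measure.pi fun _ => μ) := by
  letI : MeasureSpace ℝ := ⟨μ⟩
  haveI : SigmaFinite (volume : Measure ℝ) := ‹SigmaFinite μ›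
  exact Integrable.fin_nat_prod hf

lemma integral_pi_prod {n : ℕ} (μ : Measure ℝ) [SigmaFinite μ]
    (f : Fin n → ℝ → ℝ) :
    ∫ y : Fin n → ℝ, ∏ i, f i (y i) ∂(Measure.pi fun _ => μ)
      = ∏ i, ∫ t, f i t ∂μ := by
  letI : MeasureSpace ℝ := ⟨μ⟩
  haveI : SigmaFinite (volume : Measure ℝ) := ‹SigmaFinite μ›
  exact integral_fin_nat_prod_eq_prod f

open MeasureTheory Finset in
theorem one_point_function_eq_kernel (n : ℕ) (I : Set ℝ) (hI : MeasurableSet I)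
    (η ξ : Fin (n + 1) → ℝ → ℝ)
    (hηm : ∀ i, Measurable (η i)) (hξm : ∀ i, Measurable (ξ i))
    (hint : ∀ i j, IntegrableOn (fun x => η i x * ξ j x) I)
    (g c : Matrix (Fin (n + 1)) (Fin (n + 1)) ℝ)
    (hg : ∀ i j, g i j = ∫ x in I, η i x * ξ j x)
    (hc : ∀ i j, ∑ k, g i k * c j k = if i = j then (1 : ℝ) else 0)
    (p : (Fin (n + 1) → ℝ) → ℝ)
    (hp : ∀ v, p v =
      (Matrix.of fun i j : Fin (n + 1) => η i (v j)).det *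
        (Matrix.of fun i j : Fin (n + 1) => ξ i (v j)).det /
          ((n + 1).factorial * g.det))
    (K : ℝ → ℝ → ℝ)
    (hK : ∀ x y, K x y = ∑ i, ∑ j, η i x * c i j * ξ j y)
    (x : ℝ) (hx : x ∈ I) :
    (n + 1 : ℝ) *
        ∫ y : Fin n → ℝ in Set.univ.pi fun _ => I, p (Fin.cons x y) =
      K x x := by
  classical
  -- g has right inverse c.transpose
  have hmul : g * c.transpose = 1 := by
    ext i j
    simpa [Matrix.mul_apply, Matrix.one_apply] using hc i j
  have hdg : g.det ≠ 0 := by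
    intro h
    have h2 := congrArg Matrix.det hmul
    rw [Matrix.det_mul, h, zero_mul, Matrix.det_one] at h2
    exact zero_ne_one h2
  have hinv : g⁻¹ = c.transpose := Matrix.inv_eq_right_inv hmul
  have hadj : ∀ a k, g.adjugate k a = g.det * c a k := by
    intro a k
    have h1 : g⁻¹ k a = c a k := by rw [hinv]; rfl
    rw [Matrix.inv_def] at h1
    simp only [Matrix.smul_apply, smul_eq_mul, Ring.inverse_eq_inv'] at h1
    field_simp at h1
    linarith [h1]
  -- the matrices M a
  set M : Fin (n + 1) → Matrix (Fin (n + 1)) (Fin (n + 1)) ℝ :=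
    fun a => g.updateRow a (fun k => η a x * ξ k x) with hM
  have hMdet : ∀ a, (M a).det = g.det * ∑ k, η a x * c a k * ξ k x := by
    intro a
    have h0 : (fun k => η a x * ξ k x) = η a x • (fun k => ξ k x) := rfl
    rw [hM]
    simp only [h0]
    rw [Matrix.det_updateRow_smul, ← Matrix.cramer_transpose_apply,
      Matrix.cramer_eq_adjugate_mulVec]
    simp only [Matrix.mulVec, dotProduct, ← Matrix.adjugate_transpose,
      Matrix.transpose_apply, hadj, Finset.mul_sum]
    refine Finset.sum_congr rfl fun k _ => by ring
  -- the key integral identity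
  have hmeas : (volume : Measure (Fin n → ℝ)).restrict (Set.univ.pi fun _ => I)
      = Measure.pi (fun _ : Fin n => volume.restrict I) := restrict_pi_eq_pi_restrict hI
  have hdet2 : ∀ v : Fin (n + 1) → ℝ,
      (Matrix.of fun i j : Fin (n + 1) => η i (v j)).det *
          (Matrix.of fun i j : Fin (n + 1) => ξ i (v j)).det
        = ∑ σ : Equiv.Perm (Fin (n + 1)), ∑ τ : Equiv.Perm (Fin (n + 1)),
            (((Equiv.Perm.sign σ : ℤ) : ℝ) * ((Equiv.Perm.sign τ : ℤ) : ℝ))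
              * ∏ j, (η (σ j) (v j) * ξ (τ j) (v j)) := by
    intro v
    rw [Matrix.det_apply', Matrix.det_apply', Finset.sum_mul_sum]
    refine Finset.sum_congr rfl fun σ _ => Finset.sum_congr rfl fun τ _ => ?_
    rw [mul_mul_mul_comm, ← Finset.prod_mul_distrib]
    simp only [Matrix.of_apply]
  have hprod : ∀ (σ τ : Equiv.Perm (Fin (n + 1))) (y : Fin n → ℝ),
      (∏ j, (η (σ j) ((Fin.cons x y : Fin (n + 1) → ℝ) j)
          * ξ (τ j) ((Fin.cons x y : Fin (n + 1) → ℝ) j)))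
        = (η (σ 0) x * ξ (τ 0) x)
            * ∏ j : Fin n, (η (σ j.succ) (y j) * ξ (τ j.succ) (y j)) := by
    intro σ τ y
    rw [Fin.prod_univ_succ]
    simp [Fin.cons_zero, Fin.cons_succ]
  have hintg : ∀ (σ τ : Equiv.Perm (Fin (n + 1))),
      Integrable (fun y : Fin n → ℝ =>
        ∏ j : Fin n, (η (σ j.succ) (y j) * ξ (τ j.succ) (y j)))
        (Measure.pi fun _ => volume.restrict I) :=
    fun σ τ => integrable_pi_prod _ (fun j => hint (σ j.succ) (τ j.succ))
  have key : (∫ y : Fin n → ℝ in Set.univ.pi fun _ => I,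
        (Matrix.of fun i j : Fin (n + 1) => η i ((Fin.cons x y : Fin (n + 1) → ℝ) j)).det *
          (Matrix.of fun i j : Fin (n + 1) => ξ i ((Fin.cons x y : Fin (n + 1) → ℝ) j)).det)
      = ∑ σ : Equiv.Perm (Fin (n + 1)), ∑ τ : Equiv.Perm (Fin (n + 1)),
          (((Equiv.Perm.sign σ : ℤ) : ℝ) * ((Equiv.Perm.sign τ : ℤ) : ℝ)
              * (η (σ 0) x * ξ (τ 0) x))
            * ∏ j : Fin n, g (σ j.succ) (τ j.succ) := by
    rw [hmeas]
    simp_rw [hdet2, hprod, ← mul_assoc]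
    rw [integral_finset_sum _ (fun σ _ =>
      integrable_finset_sum _ (fun τ _ => ((hintg σ τ).const_mul _)))]
    refine Finset.sum_congr rfl fun σ _ => ?_
    rw [integral_finset_sum _ (fun τ _ => (hintg σ τ).const_mul _)]
    refine Finset.sum_congr rfl fun τ _ => ?_
    rw [integral_const_mul,
      integral_pi_prod (volume.restrict I) (fun j t => η (σ j.succ) t * ξ (τ j.succ) t)]
    congr 1
    exact Finset.prod_congr rfl fun j _ => (hg _ _).symm
  -- inner sum over τ gives det (M (σ 0))
  have hsum_tau : ∀ σ : Equiv.Perm (Fin (n + 1)),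
      (∑ τ : Equiv.Perm (Fin (n + 1)),
          (((Equiv.Perm.sign σ : ℤ) : ℝ) * ((Equiv.Perm.sign τ : ℤ) : ℝ)
              * (η (σ 0) x * ξ (τ 0) x))
            * ∏ j : Fin n, g (σ j.succ) (τ j.succ))
        = (M (σ 0)).det := by
    intro σ
    rw [← Equiv.sum_comp (Equiv.mulLeft σ)]
    have hsgn : ∀ π : Equiv.Perm (Fin (n + 1)),
        ((Equiv.Perm.sign σ : ℤ) : ℝ) * ((Equiv.Perm.sign (σ * π) : ℤ) : ℝ)
          = ((Equiv.Perm.sign π : ℤ) : ℝ) := by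
      intro π
      rcases Int.units_eq_one_or (Equiv.Perm.sign σ) with h | h <;>
        simp [Equiv.Perm.sign_mul, h]
    have hterm : ∀ π : Equiv.Perm (Fin (n + 1)),
        (η (σ 0) x * ξ ((σ * π) 0) x)
            * ∏ j : Fin n, g (σ j.succ) ((σ * π) j.succ)
          = ∏ j, ((M (σ 0)).submatrix σ σ) j (π j) := by
      intro π
      rw [Fin.prod_univ_succ]
      simp only [Matrix.submatrix_apply, Equiv.Perm.mul_apply, hM]
      congr 1
      · simp [Matrix.updateRow_self]
      · refine Finset.prod_congr rfl fun j _ => ?_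
        rw [Matrix.updateRow_ne (σ.injective.ne (Fin.succ_ne_zero j))]
    calc (∑ π : Equiv.Perm (Fin (n + 1)),
          (((Equiv.Perm.sign σ : ℤ) : ℝ) * ((Equiv.Perm.sign ((Equiv.mulLeft σ) π) : ℤ) : ℝ)
              * (η (σ 0) x * ξ (((Equiv.mulLeft σ) π) 0) x))
            * ∏ j : Fin n, g (σ j.succ) (((Equiv.mulLeft σ) π) j.succ))
        = ∑ π : Equiv.Perm (Fin (n + 1)),
            ((Equiv.Perm.sign π : ℤ) : ℝ) * ∏ j, ((M (σ 0)).submatrix σ σ) j (π j) := by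
          refine Finset.sum_congr rfl fun π _ => ?_
          rw [show (Equiv.mulLeft σ) π = σ * π from rfl, mul_assoc, hterm π, hsgn π]
      _ = ((M (σ 0)).submatrix σ σ).transpose.det := by
          rw [Matrix.det_apply']
          exact Finset.sum_congr rfl fun π _ => by
            simp [Matrix.transpose_apply]
      _ = (M (σ 0)).det := by
          rw [Matrix.det_transpose, Matrix.det_submatrix_equiv_self]
  -- sum over σ
  have hsum_sigma : (∑ σ : Equiv.Perm (Fin (n + 1)), (M (σ 0)).det)
      = (n.factorial : ℝ) * ∑ a, (M a).det := by
    rw [← Equiv.sum_comp (Equiv.Perm.decomposeFin.symm) (fun σ => (M (σ 0)).det),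
      Fintype.sum_prod_type]
    simp only [Equiv.Perm.decomposeFin_symm_apply_zero, Finset.sum_const,
      Finset.card_univ, Fintype.card_perm, Fintype.card_fin, nsmul_eq_mul]
    rw [Finset.mul_sum]
  -- put everything together
  simp_rw [hp]
  rw [integral_div, key]
  simp_rw [hsum_tau]
  rw [hsum_sigma]
  have hKx : (∑ a, (M a).det) = g.det * K x x := by
    rw [hK]
    simp_rw [hMdet]
    rw [← Finset.mul_sum]
  rw [hKx, hK]
  have hfact : ((n + 1).factorial : ℝ) = (n + 1) * n.factorial := by
    rw [Nat.factorial_succ]; push_cast; ring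
  rw [hfact]
  have hnf : (n.factorial : ℝ) ≠ 0 := Nat.cast_ne_zero.mpr n.factorial_ne_zero
  field_simp
end
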